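/- Let n ≥ 1, a ∈ ℝ, and f⁽¹⁾ : ℝⁿ → ℝⁿ be defined componentwise by f⁽¹⁾(x)_i = (1+a)·x_i² − x_i³ − a·x_i. Then for all x, z ∈ ℝⁿ, ⟨x − z, f⁽¹⁾(x) − f⁽¹⁾(z)⟩ ≤ ((a² − a + 1)/3)·‖x − z‖². -/
import Mathlib

lemma scalar_osl (a s t : ℝ) :
    (s - t) * (((1 + a) * s ^ 2 - s ^ 3 - a * s) - ((1 + a) * t ^ 2 - t ^ 3 - a * t))
      ≤ ((a ^ 2 - a + 1) / 3) * (s - t) ^ 2 := by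
  nlinarith [sq_nonneg (s - t), sq_nonneg (s + t - 2*(1+a)/3), sq_nonneg ((s - t) * (s + t - 2*(1+a)/3)), sq_nonneg (s*t), sq_nonneg (s+t)]

/-- the componentwise cubic
`f⁽¹⁾(x)_i = (1+a)x_i² − x_i³ − a x_i` satisfies the one-sided Lipschitz
condition `⟨x − z, f⁽¹⁾(x) − f⁽¹⁾(z)⟩ ≤ ((a² − a + 1)/3)‖x − z‖²`. -/
theorem stmt_12 (n : ℕ) (hn : 1 ≤ n) (a : ℝ)
    (f : (Fin n → ℝ) → (Fin n → ℝ))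
    (hf : ∀ x : Fin n → ℝ, ∀ i : Fin n,
      f x i = (1 + a) * (x i) ^ 2 - (x i) ^ 3 - a * x i) :
    ∀ x z : Fin n → ℝ,
      (∑ i, (x i - z i) * (f x i - f z i))
        ≤ ((a ^ 2 - a + 1) / 3) * ∑ i, (x i - z i) ^ 2 := by
  intro x z
  rw [Finset.mul_sum]
  apply Finset.sum_le_sum
  intro i _
  rw [hf x i, hf z i]
  exact scalar_osl a (x i) (z i)
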